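/- For h as above and interior equilibrium u* = a_{2,1}(a_{1,2} - a_{2,2}) / D with D = a_{1,2}(a_{2,1} - a_{1,1}) + a_{2,1}(a_{1,2} - a_{2,2}) != 0, one has h'(u*) = (a_{2,1} - a_{1,1})(a_{1,2} - a_{2,2})[a_{1,2}(a_{1,1} - a_{2,1}) + a_{2,1}(a_{2,2} - a_{1,2})] / (a_{1,1} a_{2,2} - a_{1,2} a_{2,1})^2. -/

import Mathlib

noncomputable def twoTypeH (a11 a12 a21 a22 : ℝ) (u : ℝ) : ℝ :=
  (a12 / (a12 * u + a22 * (1 - u)) - a21 / (a11 * u + a21 * (1 - u))) * u * (1 - u)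

set_option maxHeartbeats 2000000 in
theorem twoType_interior_derivative
    (a11 a12 a21 a22 : ℝ)
    (h11 : 0 < a11) (h12 : 0 < a12) (h21 : 0 < a21) (h22 : 0 < a22)
    (hdet : a11 * a22 ≠ a12 * a21)
    (hD : a12 * (a21 - a11) + a21 * (a12 - a22) ≠ 0)
    (hstar : a21 * (a12 - a22) / (a12 * (a21 - a11) + a21 * (a12 - a22)) ∈ Set.Ioo (0 : ℝ) 1) :
    HasDerivAt (twoTypeH a11 a12 a21 a22)
      ((a21 - a11) * (a12 - a22) * (a12 * (a11 - a21) + a21 * (a22 - a12)) /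
        (a11 * a22 - a12 * a21) ^ 2)
      (a21 * (a12 - a22) / (a12 * (a21 - a11) + a21 * (a12 - a22))) := by
  set u := a21 * (a12 - a22) / (a12 * (a21 - a11) + a21 * (a12 - a22)) with hu
  obtain ⟨hu0, hu1⟩ := hstar
  have hd1 : a12 * u + a22 * (1 - u) ≠ 0 := by
    have : 0 < a12 * u + a22 * (1 - u) := by
      have h1 : 0 < a12 * u := mul_pos h12 hu0
      have h2 : 0 < a22 * (1 - u) := mul_pos h22 (by linarith)
      linarith
    linarith
  have hd2 : a11 * u + a21 * (1 - u) ≠ 0 := by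
    have : 0 < a11 * u + a21 * (1 - u) := by
      have h1 : 0 < a11 * u := mul_pos h11 hu0
      have h2 : 0 < a21 * (1 - u) := mul_pos h21 (by linarith)
      linarith
    linarith
  have H1 : HasDerivAt (fun x : ℝ => a12 * x + a22 * (1 - x)) (a12 - a22) u := by
    have h : (fun x : ℝ => a12 * x + a22 * (1 - x)) = fun x => (a12 - a22) * x + a22 := by
      funext x; ring
    rw [h]
    simpa using ((hasDerivAt_id u).const_mul (a12 - a22)).add_const a22
  have H2 : HasDerivAt (fun x : ℝ => a11 * x + a21 * (1 - x)) (a11 - a21) u := by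
    have h : (fun x : ℝ => a11 * x + a21 * (1 - x)) = fun x => (a11 - a21) * x + a21 := by
      funext x; ring
    rw [h]
    simpa using ((hasDerivAt_id u).const_mul (a11 - a21)).add_const a21
  have F1 := (hasDerivAt_const u a12).div H1 hd1
  have F2 := (hasDerivAt_const u a21).div H2 hd2
  have Hlin : HasDerivAt (fun x : ℝ => 1 - x) (-1) u := by
    simpa using (hasDerivAt_id u).const_sub 1
  have G := ((F1.sub F2).mul (hasDerivAt_id u)).mul Hlin
  have Heq : twoTypeH a11 a12 a21 a22 =
      fun x => (a12 / (a12 * x + a22 * (1 - x)) - a21 / (a11 * x + a21 * (1 - x))) * x * (1 - x) := rfl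
  rw [Heq]
  refine G.congr_deriv ?_
  simp only [Pi.mul_apply, Pi.sub_apply, Pi.div_apply, id]
  have hdet' : a11 * a22 - a12 * a21 ≠ 0 := sub_ne_zero.mpr hdet
  have hdet'' : a12 * a21 - a11 * a22 ≠ 0 := sub_ne_zero.mpr (Ne.symm hdet)
  have hv1 : a12 * u + a22 * (1 - u)
      = a12 * (a12 * a21 - a11 * a22) / (a12 * (a21 - a11) + a21 * (a12 - a22)) := by
    rw [hu]; field_simp; ring
  have hv2 : a11 * u + a21 * (1 - u)
      = a21 * (a12 * a21 - a11 * a22) / (a12 * (a21 - a11) + a21 * (a12 - a22)) := by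
    rw [hu]; field_simp; ring
  rw [hv1, hv2, hu]
  field_simp
  ring
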